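/- GreedyAllocationSubmodular is (1+α)-competitive for fractional matroid online bipartite vertex cover: let G = (L,R,E) be a finite bipartite graph whose right vertices arrive in the order v_1, …, v_m, let f be a nonnegative monotone submodular set function on subsets of L, and let y : L → [0,1] and z : R → [0,1] be produced by GreedyAllocationSubmodular. Then y_u + z_v ≥ 1 for every edge (u,v) ∈ E, and f̂(y) + ∑_{v∈R} z_v ≤ (1+α)·(f(C∩L) + |C∩R|) for every vertex cover C of G. -/

import Mathlib

set_option linter.unusedSectionVars false
set_option maxHeartbeats 1000000

open Finset MeasureTheory intervalIntegral Set


open Finset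

/-- The constant `α = 1/(e-1)`, so that `1 + α = 1/(1 - 1/e)`. -/
noncomputable def alpha : ℝ := 1 / (Real.exp 1 - 1)

/-- The Lovász extension of a set function `f` on subsets of a finite type `L`:
`f̂(y) = ∫₀¹ f({u : y u ≥ t}) dt`. -/
noncomputable def lovasz {L : Type*} [Fintype L] (f : Finset L → ℝ) (y : L → ℝ) : ℝ :=
  ∫ t in (0:ℝ)..1, f (Finset.univ.filter fun u => t ≤ y u)

/-- `(CL, CR)` is a vertex cover of the bipartite graph with edge set `E ⊆ L × R`. -/
def IsVertexCover {L R : Type*} (E : Finset (L × R)) (CL : Finset L) (CR : Finset R) : Prop :=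
  ∀ e ∈ E, e.1 ∈ CL ∨ e.2 ∈ CR

namespace Stmt14Aux

variable {L : Type*} [Fintype L] [DecidableEq L]

noncomputable def Slev (y : L → ℝ) (t : ℝ) : Finset L :=
  Finset.univ.filter fun u => t ≤ y u

lemma Slev_anti (y : L → ℝ) {s t : ℝ} (hst : s ≤ t) : Slev y t ⊆ Slev y s := by
  intro u hu
  simp only [Slev, Finset.mem_filter, Finset.mem_univ, true_and] at *
  linarith

lemma Slev_mono_y {y y' : L → ℝ} (h : ∀ u, y u ≤ y' u) (t : ℝ) : Slev y t ⊆ Slev y' t := by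
  intro u hu
  simp only [Slev, Finset.mem_filter, Finset.mem_univ, true_and] at *
  exact le_trans hu (h u)

lemma lovasz_eq (f : Finset L → ℝ) (y : L → ℝ) :
    lovasz f y = ∫ t in (0:ℝ)..1, f (Slev y t) := rfl

lemma f_anti (f : Finset L → ℝ) (hf_mono : ∀ A B : Finset L, A ⊆ B → f A ≤ f B)
    (T : Finset L → Finset L) (hT : ∀ {S S' : Finset L}, S ⊆ S' → T S ⊆ T S')
    (y : L → ℝ) : Antitone fun t => f (T (Slev y t)) :=
  fun _ _ hst => hf_mono _ _ (hT (Slev_anti y hst))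

lemma anti_int {g : ℝ → ℝ} (hg : AntitoneOn g (Icc 0 1)) {c d : ℝ}
    (hc : c ∈ Icc (0:ℝ) 1) (hd : d ∈ Icc (0:ℝ) 1) :
    IntervalIntegrable g volume c d :=
  (hg.mono (uIcc_subset_Icc hc hd)).intervalIntegrable

lemma mul_antiOn {w g : ℝ → ℝ} (hw : AntitoneOn w (Icc 0 1))
    (hwnn : ∀ t ∈ Icc (0:ℝ) 1, 0 ≤ w t) (hg : AntitoneOn g (Icc 0 1))
    (hgnn : ∀ t ∈ Icc (0:ℝ) 1, 0 ≤ g t) :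
    AntitoneOn (fun t => w t * g t) (Icc 0 1) := fun s hs t ht hst =>
  mul_le_mul (hw hs ht hst) (hg hs ht hst) (hgnn t ht) (hwnn s hs)

/-- Key formula: raising `y` to `max (y u) a` on `N = filter P` changes the weighted
Lovász-type integral by `∫₀ᵃ w t * (f ((S t ∩ C) ∪ N) - f (S t ∩ C))`. -/
theorem raise_eq (f : Finset L → ℝ)
    (hf_nonneg : ∀ S : Finset L, 0 ≤ f S)
    (hf_mono : ∀ A B : Finset L, A ⊆ B → f A ≤ f B)
    (C : Finset L) (w : ℝ → ℝ)
    (hw_anti : AntitoneOn w (Icc 0 1)) (hw_nn : ∀ t ∈ Icc (0:ℝ) 1, 0 ≤ w t)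
    (y : L → ℝ) (P : L → Prop) [DecidablePred P]
    (hN : Finset.univ.filter P ⊆ C)
    {a : ℝ} (ha0 : 0 ≤ a) (ha1 : a ≤ 1) :
    ∫ t in (0:ℝ)..1, w t * f ((Slev (fun u => if P u then max (y u) a else y u) t) ∩ C)
      = (∫ t in (0:ℝ)..1, w t * f ((Slev y t) ∩ C))
        + ∫ t in (0:ℝ)..a,
            w t * (f (((Slev y t) ∩ C) ∪ Finset.univ.filter P) - f ((Slev y t) ∩ C)) := by
  set N := Finset.univ.filter P with hNdef
  set G1 : ℝ → ℝ := fun t => w t * f (((Slev y t) ∩ C) ∪ N) with hG1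
  set G2 : ℝ → ℝ := fun t => w t * f ((Slev y t) ∩ C) with hG2
  set F : ℝ → ℝ := fun t => w t * f ((Slev (fun u => if P u then max (y u) a else y u) t) ∩ C)
    with hF
  have key : ∀ t : ℝ, F t = if t ≤ a then G1 t else G2 t := by
    intro t
    have hset : (Slev (fun u => if P u then max (y u) a else y u) t) ∩ C
        = if t ≤ a then ((Slev y t) ∩ C) ∪ N else (Slev y t) ∩ C := by
      split_ifs with hta
      · ext u
        simp only [Slev, Finset.mem_inter, Finset.mem_filter, Finset.mem_union,
          Finset.mem_univ, true_and, hNdef]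
        constructor
        · rintro ⟨h1, h2⟩
          by_cases hP : P u
          · exact Or.inr hP
          · simp only [hP, if_false] at h1; exact Or.inl ⟨h1, h2⟩
        · rintro (⟨h1, h2⟩ | hP)
          · refine ⟨?_, h2⟩
            split_ifs with hP
            · exact le_trans h1 (le_max_left _ _)
            · exact h1
          · have hC : u ∈ C := hN (by simp [hNdef, hP])
            refine ⟨?_, hC⟩
            simp only [hP, if_true]
            exact le_trans hta (le_max_right _ _)
      · push_neg at hta
        ext u
        simp only [Slev, Finset.mem_inter, Finset.mem_filter, Finset.mem_univ, true_and]
        constructor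
        · rintro ⟨h1, h2⟩
          refine ⟨?_, h2⟩
          split_ifs at h1 with hP
          · rcases le_max_iff.1 h1 with h | h
            · exact h
            · linarith
          · exact h1
        · rintro ⟨h1, h2⟩
          refine ⟨?_, h2⟩
          split_ifs with hP
          · exact le_trans h1 (le_max_left _ _)
          · exact h1
    rw [hF]
    simp only [hset, apply_ite f, mul_ite]
    rfl
  -- antitonicity / integrability
  have hanti1 : AntitoneOn G1 (Icc 0 1) :=
    mul_antiOn hw_anti hw_nn
      ((f_anti f hf_mono (fun S => (S ∩ C) ∪ N) (fun h => Finset.union_subset_union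
        (Finset.inter_subset_inter h Finset.Subset.rfl) Finset.Subset.rfl) y).antitoneOn _)
      (fun t _ => hf_nonneg _)
  have hanti2 : AntitoneOn G2 (Icc 0 1) :=
    mul_antiOn hw_anti hw_nn
      ((f_anti f hf_mono (fun S => S ∩ C) (fun h => Finset.inter_subset_inter h
        Finset.Subset.rfl) y).antitoneOn _)
      (fun t _ => hf_nonneg _)
  have ha : a ∈ Icc (0:ℝ) 1 := ⟨ha0, ha1⟩
  have h0 : (0:ℝ) ∈ Icc (0:ℝ) 1 := ⟨le_refl _, zero_le_one⟩
  have h1 : (1:ℝ) ∈ Icc (0:ℝ) 1 := ⟨zero_le_one, le_refl _⟩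
  have hG1a : IntervalIntegrable G1 volume 0 a := anti_int hanti1 h0 ha
  have hG2a : IntervalIntegrable G2 volume 0 a := anti_int hanti2 h0 ha
  have hG2a1 : IntervalIntegrable G2 volume a 1 := anti_int hanti2 ha h1
  -- F is integrable on 0..a and a..1
  have hFa : IntervalIntegrable F volume 0 a := by
    rw [intervalIntegrable_iff] at hG1a ⊢
    refine hG1a.congr_fun ?_ measurableSet_uIoc
    intro t ht
    rw [Set.uIoc_of_le ha0] at ht
    exact (key t).symm ▸ (if_pos ht.2).symm ▸ rfl
  have hFa1 : IntervalIntegrable F volume a 1 := by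
    rw [intervalIntegrable_iff] at hG2a1 ⊢
    refine hG2a1.congr_fun ?_ measurableSet_uIoc
    intro t ht
    rw [Set.uIoc_of_le ha1] at ht
    rw [key t, if_neg (not_le.2 ht.1)]
  have hsplitF : (∫ t in (0:ℝ)..a, F t) + (∫ t in a..1, F t) = ∫ t in (0:ℝ)..1, F t :=
    integral_add_adjacent_intervals hFa hFa1
  have hsplitG2 : (∫ t in (0:ℝ)..a, G2 t) + (∫ t in a..1, G2 t) = ∫ t in (0:ℝ)..1, G2 t :=
    integral_add_adjacent_intervals hG2a hG2a1
  have hFeq1 : (∫ t in (0:ℝ)..a, F t) = ∫ t in (0:ℝ)..a, G1 t := by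
    rw [integral_of_le ha0, integral_of_le ha0]
    refine setIntegral_congr_fun measurableSet_Ioc ?_
    intro t ht
    rw [key t, if_pos ht.2]
  have hFeq2 : (∫ t in a..1, F t) = ∫ t in a..1, G2 t := by
    rw [integral_of_le ha1, integral_of_le ha1]
    refine setIntegral_congr_fun measurableSet_Ioc ?_
    intro t ht
    rw [key t, if_neg (not_le.2 ht.1)]
  have hsub : (∫ t in (0:ℝ)..a,
      w t * (f (((Slev y t) ∩ C) ∪ N) - f ((Slev y t) ∩ C)))
      = (∫ t in (0:ℝ)..a, G1 t) - ∫ t in (0:ℝ)..a, G2 t := by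
    rw [← integral_sub hG1a hG2a]
    congr 1
    ext t
    simp only [hG1, hG2]
    ring
  have : (∫ t in (0:ℝ)..1, F t)
      = (∫ t in (0:ℝ)..1, G2 t) + ((∫ t in (0:ℝ)..a, G1 t) - ∫ t in (0:ℝ)..a, G2 t) := by
    rw [← hsplitF, ← hsplitG2, hFeq1, hFeq2]; ring
  rw [hF] at this
  rw [this, hsub]

theorem lovasz_raise (f : Finset L → ℝ)
    (hf_nonneg : ∀ S : Finset L, 0 ≤ f S)
    (hf_mono : ∀ A B : Finset L, A ⊆ B → f A ≤ f B)
    (y : L → ℝ) (P : L → Prop) [DecidablePred P]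
    {a : ℝ} (ha0 : 0 ≤ a) (ha1 : a ≤ 1) :
    lovasz f (fun u => if P u then max (y u) a else y u)
      = lovasz f y
        + ∫ t in (0:ℝ)..a, (f ((Slev y t) ∪ Finset.univ.filter P) - f (Slev y t)) := by
  have h := raise_eq f hf_nonneg hf_mono Finset.univ (fun _ => (1:ℝ))
    (fun _ _ _ _ _ => le_refl 1) (fun _ _ => zero_le_one) y P
    (Finset.subset_univ _) ha0 ha1
  simpa only [Finset.inter_univ, one_mul, ← lovasz_eq] using h

end Stmt14Aux

open Stmt14Aux

/-- GreedyAllocationSubmodular is `(1+α)`-competitive for fractional matroid online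
bipartite vertex cover. The online vertices are `0, 1, …, m-1 : Fin m`, arriving in this
order. `Y i` is the potential vector on the offline side `L` after the first `i` arrivals
(`Y 0 = 0`); at step `i`, `A i` is the largest `a ∈ [0,1]` with
`(1-a) + f̂(y^{(a)}) - f̂(y) ≤ 1 + α`, where `y^{(a)}` raises `y_u` to `max (y_u) a` for
`u ∈ N(v_i)`; then `Y (i+1) = y^{(A i)}` and `z_{v_i} = 1 - A i`. -/
theorem stmt14 {L : Type*} [Fintype L] [DecidableEq L] (m : ℕ)
    (E : Finset (L × Fin m)) (f : Finset L → ℝ)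
    (hf_nonneg : ∀ S : Finset L, 0 ≤ f S)
    (hf_mono : ∀ A B : Finset L, A ⊆ B → f A ≤ f B)
    (hf_submod : ∀ A B : Finset L, f (A ∪ B) + f (A ∩ B) ≤ f A + f B)
    (Y : ℕ → L → ℝ) (A : Fin m → ℝ) (z : Fin m → ℝ)
    (hY0 : Y 0 = fun _ => 0)
    (hA : ∀ i : Fin m,
      IsGreatest {a : ℝ | a ∈ Set.Icc (0:ℝ) 1 ∧
        (1 - a) + lovasz f (fun u => if (u, i) ∈ E then max (Y i u) a else Y i u)
          - lovasz f (Y i) ≤ 1 + alpha} (A i))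
    (hYstep : ∀ i : Fin m, ∀ u : L,
      Y ((i : ℕ) + 1) u = if (u, i) ∈ E then max (Y i u) (A i) else Y i u)
    (hz : ∀ i : Fin m, z i = 1 - A i) :
    (∀ e ∈ E, 1 ≤ Y m e.1 + z e.2) ∧
    ∀ CL : Finset L, ∀ CR : Finset (Fin m), IsVertexCover E CL CR →
      lovasz f (Y m) + ∑ v : Fin m, z v ≤ (1 + alpha) * (f CL + (CR.card : ℝ)) := by
  have he1 : (1:ℝ) < Real.exp 1 := by
    have := Real.exp_one_gt_d9; norm_num at this; linarith
  have hα : 0 < alpha := div_pos one_pos (by linarith)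
  have hstep : ∀ i : Fin m, ∀ u, Y i u ≤ Y ((i:ℕ)+1) u := by
    intro i u
    rw [hYstep i u]
    split_ifs
    · exact le_max_left _ _
    · exact le_refl _
  have hchain : ∀ u, ∀ b, b ≤ m → ∀ a, a ≤ b → Y a u ≤ Y b u := by
    intro u b
    induction b with
    | zero =>
      intro _ a ha
      rw [Nat.le_zero.mp ha]
    | succ n ih =>
      intro hnm a ha
      rcases Nat.eq_or_lt_of_le ha with rfl | h
      · exact le_refl _
      · have h1 : a ≤ n := Nat.lt_succ_iff.mp h
        have h2 : n < m := Nat.lt_of_succ_le hnm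
        calc Y a u ≤ Y n u := ih (le_of_lt h2) a h1
          _ ≤ Y (n+1) u := hstep ⟨n, h2⟩ u
  constructor
  · rintro ⟨u, v⟩ hev
    have h1 : A v ≤ Y ((v:ℕ)+1) u := by
      rw [hYstep v u, if_pos hev]; exact le_max_right _ _
    have h2 : Y ((v:ℕ)+1) u ≤ Y m u :=
      hchain u m (le_refl _) ((v:ℕ)+1) (Nat.succ_le_of_lt v.isLt)
    simp only [hz v]
    linarith
  · intro CL CR hcov
    set w : ℝ → ℝ := fun t => (1+alpha)/(t+alpha) with hwdef
    have hw_pos : ∀ t ∈ Icc (0:ℝ) 1, 0 < w t := fun t ht =>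
      div_pos (by linarith) (by linarith [ht.1])
    have hw_nn : ∀ t ∈ Icc (0:ℝ) 1, 0 ≤ w t := fun t ht => (hw_pos t ht).le
    have hw_anti : AntitoneOn w (Icc 0 1) := by
      intro s hs t ht hst
      have : (0:ℝ) < s + alpha := by linarith [hs.1]
      simp only [hwdef]
      gcongr
    have hw_ge1 : ∀ t ∈ Icc (0:ℝ) 1, 1 ≤ w t := by
      intro t ht
      rw [hwdef, le_div_iff₀ (by linarith [ht.1])]
      linarith [ht.2]
    set Φ : ℕ → ℝ := fun n => lovasz f (Y n) with hΦdef
    set Ψ : ℕ → ℝ := fun n => ∫ t in (0:ℝ)..1, w t * f ((Slev (Y n) t) ∩ CL) with hΨdef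
    -- integrability of the Ψ-integrand on subintervals of [0,1]
    have hPsiAnti : ∀ n : ℕ, AntitoneOn (fun t => w t * f ((Slev (Y n) t) ∩ CL)) (Icc 0 1) := by
      intro n s hs t ht hst
      have hfa : f ((Slev (Y n) t) ∩ CL) ≤ f ((Slev (Y n) s) ∩ CL) :=
        hf_mono _ _ (Finset.inter_subset_inter (Slev_anti (Y n) hst) Finset.Subset.rfl)
      exact mul_le_mul (hw_anti hs ht hst) hfa (hf_nonneg _) (hw_nn s hs)
    have hPsiInt : ∀ n : ℕ, ∀ c d : ℝ, c ∈ Icc (0:ℝ) 1 → d ∈ Icc (0:ℝ) 1 →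
        IntervalIntegrable (fun t => w t * f ((Slev (Y n) t) ∩ CL)) volume c d :=
      fun n c d hc hd => ((hPsiAnti n).mono (uIcc_subset_Icc hc hd)).intervalIntegrable
    have key : ∀ i : Fin m,
        Φ ((i:ℕ)+1) - Φ (i:ℕ) + z i
          ≤ (1+alpha) * (if i ∈ CR then 1 else 0) + (Ψ ((i:ℕ)+1) - Ψ (i:ℕ)) := by
      intro i
      have haI : A i ∈ Icc (0:ℝ) 1 := (hA i).1.1
      have hfeas := (hA i).1.2
      have hYe : Y ((i:ℕ)+1) = fun u => if (u,i) ∈ E then max (Y (i:ℕ) u) (A i) else Y (i:ℕ) u :=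
        funext (hYstep i)
      by_cases hCR : i ∈ CR
      · simp only [hCR, if_true, mul_one]
        have h1 : Φ ((i:ℕ)+1) - Φ (i:ℕ) + z i ≤ 1 + alpha := by
          simp only [hΦdef]
          rw [hYe, hz i]
          linarith [hfeas]
        have h2 : Ψ (i:ℕ) ≤ Ψ ((i:ℕ)+1) := by
          simp only [hΨdef]
          refine integral_mono_on zero_le_one
            (hPsiInt (i:ℕ) 0 1 ⟨le_refl _, zero_le_one⟩ ⟨zero_le_one, le_refl _⟩)
            (hPsiInt ((i:ℕ)+1) 0 1 ⟨le_refl _, zero_le_one⟩ ⟨zero_le_one, le_refl _⟩) ?_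
          intro t ht
          refine mul_le_mul_of_nonneg_left ?_ (hw_nn t ht)
          exact hf_mono _ _ (Finset.inter_subset_inter
            (Slev_mono_y (hstep i) t) Finset.Subset.rfl)
        linarith
      · -- uncovered online vertex: all neighbors in CL
        simp only [hCR, if_false, mul_zero, zero_add]
        have hNC : Finset.univ.filter (fun u => (u,i) ∈ E) ⊆ CL := by
          intro u hu
          have huE : (u,i) ∈ E := (Finset.mem_filter.mp hu).2
          rcases hcov (u,i) huE with h | h
          · exact h
          · exact absurd h hCR
        set g : ℝ → ℝ := fun t =>
          f ((Slev (Y (i:ℕ)) t) ∪ Finset.univ.filter (fun u => (u,i) ∈ E))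
            - f (Slev (Y (i:ℕ)) t) with hgdef
        set h : ℝ → ℝ := fun t =>
          f (((Slev (Y (i:ℕ)) t) ∩ CL) ∪ Finset.univ.filter (fun u => (u,i) ∈ E))
            - f ((Slev (Y (i:ℕ)) t) ∩ CL) with hhdef
        have hΔΦ : ∀ {a : ℝ}, 0 ≤ a → a ≤ 1 →
            lovasz f (fun u => if (u,i) ∈ E then max (Y (i:ℕ) u) a else Y (i:ℕ) u)
              = lovasz f (Y (i:ℕ)) + ∫ t in (0:ℝ)..a, g t :=
          fun h0 h1 => lovasz_raise f hf_nonneg hf_mono (Y (i:ℕ)) _ h0 h1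
        have hΔΨ : Ψ ((i:ℕ)+1) = Ψ (i:ℕ) + ∫ t in (0:ℝ)..(A i), w t * h t := by
          simp only [hΨdef]
          rw [hYe]
          exact raise_eq f hf_nonneg hf_mono CL w hw_anti hw_nn (Y (i:ℕ)) _ hNC haI.1 haI.2
        have hgh : ∀ t, g t ≤ h t := by
          intro t
          set S := Slev (Y (i:ℕ)) t
          set N := Finset.univ.filter (fun u => (u,i) ∈ E)
          have hsub := hf_submod S ((S ∩ CL) ∪ N)
          have e1 : S ∪ ((S ∩ CL) ∪ N) = S ∪ N := by
            ext u
            simp only [Finset.mem_union, Finset.mem_inter]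
            tauto
          have e2 : S ∩ ((S ∩ CL) ∪ N) = S ∩ CL := by
            ext u
            simp only [Finset.mem_union, Finset.mem_inter]
            constructor
            · rintro ⟨h1, ⟨_, h2⟩ | h2⟩
              · exact ⟨h1, h2⟩
              · exact ⟨h1, hNC h2⟩
            · rintro ⟨h1, h2⟩
              exact ⟨h1, Or.inl ⟨h1, h2⟩⟩
          rw [e1, e2] at hsub
          simp only [hgdef, hhdef]
          linarith
        have hg_nn : ∀ t, 0 ≤ g t := fun t =>
          sub_nonneg.2 (hf_mono _ _ Finset.subset_union_left)
        have hh_nn : ∀ t, 0 ≤ h t := fun t =>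
          sub_nonneg.2 (hf_mono _ _ Finset.subset_union_left)
        have hganti1 : Antitone (fun t =>
            f ((Slev (Y (i:ℕ)) t) ∪ Finset.univ.filter (fun u => (u,i) ∈ E))) :=
          fun s t hst => hf_mono _ _
            (Finset.union_subset_union (Slev_anti _ hst) Finset.Subset.rfl)
        have hganti2 : Antitone (fun t => f (Slev (Y (i:ℕ)) t)) :=
          fun s t hst => hf_mono _ _ (Slev_anti _ hst)
        have hgint : ∀ c d : ℝ, IntervalIntegrable g volume c d := fun c d =>
          (hganti1.intervalIntegrable).sub hganti2.intervalIntegrable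
        have hwh_int : ∀ c d : ℝ, c ∈ Icc (0:ℝ) 1 → d ∈ Icc (0:ℝ) 1 →
            IntervalIntegrable (fun t => w t * h t) volume c d := by
          intro c d hc hd
          have e : (fun t => w t * h t) = fun t =>
              (w t * f (((Slev (Y (i:ℕ)) t) ∩ CL) ∪ Finset.univ.filter (fun u => (u,i) ∈ E)))
              - (w t * f ((Slev (Y (i:ℕ)) t) ∩ CL)) := by
            funext t
            simp only [hhdef]
            ring
          rw [e]
          have a1 : AntitoneOn (fun t => w t *
              f (((Slev (Y (i:ℕ)) t) ∩ CL) ∪ Finset.univ.filter (fun u => (u,i) ∈ E)))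
              (Icc 0 1) := fun s hs t ht hst =>
            mul_le_mul (hw_anti hs ht hst)
              (hf_mono _ _ (Finset.union_subset_union
                (Finset.inter_subset_inter (Slev_anti _ hst) Finset.Subset.rfl)
                Finset.Subset.rfl))
              (hf_nonneg _) (hw_nn s hs)
          have a2 : AntitoneOn (fun t => w t * f ((Slev (Y (i:ℕ)) t) ∩ CL)) (Icc 0 1) :=
            fun s hs t ht hst =>
              mul_le_mul (hw_anti hs ht hst)
                (hf_mono _ _ (Finset.inter_subset_inter (Slev_anti _ hst) Finset.Subset.rfl))
                (hf_nonneg _) (hw_nn s hs)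
          exact ((a1.mono (Set.uIcc_subset_Icc hc hd)).intervalIntegrable).sub
            ((a2.mono (Set.uIcc_subset_Icc hc hd)).intervalIntegrable)
        have hΦstep : Φ ((i:ℕ)+1) = Φ (i:ℕ) + ∫ t in (0:ℝ)..(A i), g t := by
          simp only [hΦdef]
          rw [hYe]
          exact hΔΦ haI.1 haI.2
        rcases eq_or_lt_of_le haI.2 with hA1 | hA1
        · -- A i = 1 : z i = 0 and ΔΦ ≤ ΔΨ
          have hz0 : z i = 0 := by rw [hz i, hA1]; ring
          have hmono : ∫ t in (0:ℝ)..(A i), g t ≤ ∫ t in (0:ℝ)..(A i), w t * h t := by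
            refine integral_mono_on haI.1 (hgint 0 (A i))
              (hwh_int 0 (A i) ⟨le_refl _, zero_le_one⟩ haI) ?_
            intro t ht
            have ht1 : t ∈ Icc (0:ℝ) 1 := ⟨ht.1, le_trans ht.2 haI.2⟩
            calc g t ≤ h t := hgh t
              _ = 1 * h t := (one_mul _).symm
              _ ≤ w t * h t := mul_le_mul_of_nonneg_right (hw_ge1 t ht1) (hh_nn t)
          rw [hΦstep, hΔΨ, hz0]
          linarith
        · -- A i < 1 : tightness of the greedy choice
          have htle : (1 - A i) + ∫ t in (0:ℝ)..(A i), g t ≤ 1 + alpha := by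
            have := hfeas
            rw [hΔΦ haI.1 haI.2] at this
            linarith
          have htight : (1 - A i) + ∫ t in (0:ℝ)..(A i), g t = 1 + alpha := by
            by_contra hne
            have hlt : (1 - A i) + ∫ t in (0:ℝ)..(A i), g t < 1 + alpha :=
              lt_of_le_of_ne htle hne
            set Fc : ℝ → ℝ := fun x => (1 - x) + ∫ t in (0:ℝ)..x, g t with hFcdef
            have hFcont : ContinuousOn Fc (Icc 0 1) := by
              have hcg : ContinuousOn (fun x => ∫ t in (0:ℝ)..x, g t) (Set.uIcc 0 1) :=
                continuousOn_primitive_interval' (hgint 0 1) Set.left_mem_uIcc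
              rw [Set.uIcc_of_le zero_le_one] at hcg
              exact ((continuous_const.sub continuous_id).continuousOn).add hcg
            have hten : Filter.Tendsto Fc (nhdsWithin (A i) (Set.Ioc (A i) 1))
                (nhds (Fc (A i))) :=
              (hFcont (A i) haI).mono_left (nhdsWithin_mono _
                (fun x hx => ⟨le_trans haI.1 hx.1.le, hx.2⟩))
            have hev : ∀ᶠ x in nhdsWithin (A i) (Set.Ioc (A i) 1), Fc x < 1 + alpha :=
              hten.eventually_lt_const hlt
            have hmem : ∀ᶠ x in nhdsWithin (A i) (Set.Ioc (A i) 1),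
                x ∈ Set.Ioc (A i) 1 := eventually_mem_nhdsWithin
            haveI : (nhdsWithin (A i) (Set.Ioc (A i) 1)).NeBot := by
              rw [nhdsWithin_Ioc_eq_nhdsGT hA1]
              infer_instance
            obtain ⟨x, hx1, hx2⟩ := (hev.and hmem).exists
            have hxfeas : x ∈ {a : ℝ | a ∈ Set.Icc (0:ℝ) 1 ∧
                (1 - a) + lovasz f (fun u => if (u, i) ∈ E then max (Y i u) a else Y i u)
                  - lovasz f (Y i) ≤ 1 + alpha} := by
              refine ⟨⟨le_trans haI.1 hx2.1.le, hx2.2⟩, ?_⟩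
              rw [hΔΦ (le_trans haI.1 hx2.1.le) hx2.2]
              simp only [hFcdef] at hx1
              linarith
            exact absurd ((hA i).2 hxfeas) (not_le.2 hx2.1)
          have hintg : ∫ t in (0:ℝ)..(A i), g t = alpha + A i := by linarith
          have h3 : ∫ t in (0:ℝ)..(A i), w (A i) * g t ≤ ∫ t in (0:ℝ)..(A i), w t * h t := by
            refine integral_mono_on haI.1 ((hgint 0 (A i)).const_mul _)
              (hwh_int 0 (A i) ⟨le_refl _, zero_le_one⟩ haI) ?_
            intro t ht
            have ht1 : t ∈ Icc (0:ℝ) 1 := ⟨ht.1, le_trans ht.2 haI.2⟩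
            exact mul_le_mul (hw_anti ht1 haI ht.2) (hgh t) (hg_nn t) (hw_nn t ht1)
          have h4 : ∫ t in (0:ℝ)..(A i), w (A i) * g t = w (A i) * (alpha + A i) := by
            rw [intervalIntegral.integral_const_mul, hintg]
          have h5 : w (A i) * (alpha + A i) = 1 + alpha := by
            have hne : A i + alpha ≠ 0 := by
              have := haI.1
              intro hc
              nlinarith
            simp only [hwdef]
            rw [add_comm alpha (A i)]
            exact div_mul_cancel₀ _ hne
          rw [hΦstep, hΔΨ, hz i]
          linarith
    have hsum := Finset.sum_le_sum (fun i (_ : i ∈ Finset.univ) => key i)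
    have hT1 : ∑ i : Fin m, (Φ ((i:ℕ)+1) - Φ (i:ℕ)) = Φ m - Φ 0 := by
      rw [Fin.sum_univ_eq_sum_range (fun n => Φ (n+1) - Φ n) m]
      exact Finset.sum_range_sub Φ m
    have hT2 : ∑ i : Fin m, (Ψ ((i:ℕ)+1) - Ψ (i:ℕ)) = Ψ m - Ψ 0 := by
      rw [Fin.sum_univ_eq_sum_range (fun n => Ψ (n+1) - Ψ n) m]
      exact Finset.sum_range_sub Ψ m
    have hT3 : ∑ i : Fin m, ((1+alpha) * (if i ∈ CR then (1:ℝ) else 0))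
        = (1+alpha) * (CR.card : ℝ) := by
      rw [← Finset.mul_sum]
      congr 1
      rw [Finset.sum_ite_mem, Finset.univ_inter, Finset.sum_const, nsmul_eq_mul, mul_one]
    have hsum2 : Φ m - Φ 0 + ∑ v : Fin m, z v
        ≤ (1+alpha) * (CR.card : ℝ) + (Ψ m - Ψ 0) := by
      calc Φ m - Φ 0 + ∑ v : Fin m, z v
          = ∑ i : Fin m, (Φ ((i:ℕ)+1) - Φ (i:ℕ) + z i) := by
            rw [Finset.sum_add_distrib, hT1]
        _ ≤ ∑ i : Fin m, ((1+alpha) * (if i ∈ CR then (1:ℝ) else 0)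
              + (Ψ ((i:ℕ)+1) - Ψ (i:ℕ))) := hsum
        _ = (1+alpha) * (CR.card : ℝ) + (Ψ m - Ψ 0) := by
            rw [Finset.sum_add_distrib, hT2, hT3]
    -- compute Φ 0, Ψ 0, bound Ψ m
    have hSlev0 : ∀ t ∈ Set.Ioc (0:ℝ) 1, Slev (Y 0) t = (∅ : Finset L) := by
      intro t ht
      rw [hY0]
      apply Finset.filter_false_of_mem
      intro u _
      simp only [not_le]
      exact ht.1
    have hΦ0 : Φ 0 = f ∅ := by
      simp only [hΦdef, lovasz_eq]
      rw [integral_of_le zero_le_one,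
        setIntegral_congr_fun measurableSet_Ioc (g := fun _ => f (∅ : Finset L))
          (fun t ht => by rw [hSlev0 t ht])]
      simp [Real.volume_Ioc]
    have hwint : ∫ t in (0:ℝ)..1, w t = 1 + alpha := by
      have h1 : ∫ t in (0:ℝ)..1, w t = (1+alpha) * ∫ t in (0:ℝ)..1, (t+alpha)⁻¹ := by
        simp only [hwdef, div_eq_mul_inv, intervalIntegral.integral_const_mul]
      have h2 : ∫ t in (0:ℝ)..1, (t+alpha)⁻¹ = ∫ x in (0+alpha)..(1+alpha), x⁻¹ :=
        integral_comp_add_right (fun x => x⁻¹) alpha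
      have h3 : ∫ x in (0+alpha)..(1+alpha), x⁻¹ = Real.log ((1+alpha)/(0+alpha)) :=
        integral_inv_of_pos (by linarith) (by linarith)
      have h4 : (1+alpha)/(0+alpha) = Real.exp 1 := by
        have hne : Real.exp 1 - 1 ≠ 0 := by linarith
        rw [zero_add]
        unfold alpha
        field_simp
        ring
      rw [h1, h2, h3, h4, Real.log_exp, mul_one]
    have hΨ0 : Ψ 0 = (1+alpha) * f ∅ := by
      simp only [hΨdef]
      rw [integral_of_le zero_le_one,
        setIntegral_congr_fun measurableSet_Ioc (g := fun t => w t * f (∅ : Finset L))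
          (fun t ht => by rw [hSlev0 t ht, Finset.empty_inter]),
        ← integral_of_le zero_le_one, intervalIntegral.integral_mul_const, hwint]
    have hΨm : Ψ m ≤ (1+alpha) * f CL := by
      have hanti2 : AntitoneOn (fun t => w t * f CL) (Icc 0 1) := fun s hs t ht hst =>
        mul_le_mul_of_nonneg_right (hw_anti hs ht hst) (hf_nonneg CL)
      have h1 : Ψ m ≤ ∫ t in (0:ℝ)..1, w t * f CL := by
        simp only [hΨdef]
        refine integral_mono_on zero_le_one
          (hPsiInt m 0 1 ⟨le_refl _, zero_le_one⟩ ⟨zero_le_one, le_refl _⟩)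
          ((hanti2.mono (by rw [Set.uIcc_of_le zero_le_one])).intervalIntegrable)
          ?_
        intro t ht
        exact mul_le_mul_of_nonneg_left (hf_mono _ _ Finset.inter_subset_right) (hw_nn t ht)
      rw [intervalIntegral.integral_mul_const, hwint] at h1
      exact h1
    have hf0 : 0 ≤ f ∅ := hf_nonneg ∅
    simp only [hΦdef] at hsum2 hΦ0
    have hexp : (1+alpha)*(f CL + (CR.card:ℝ))
        = (1+alpha)*f CL + (1+alpha)*(CR.card:ℝ) := by ring
    have hmul : 0 ≤ alpha * f ∅ := mul_nonneg hα.le hf0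
    linarith
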